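/- Let θ ∈ (0, π/2), a = √(1+sin²θ), κ = √(1 + 4h² + sin²θ) for some h > 0. Consider X(u,v) = (1/a)(C₃ + sinθ(D₁ cos(au) + D₂ sin(au))) + (u cosθ + b)ξ + (1/κ)(C₁(cos v − 1) + C₂ sin v), where C₁, C₂, D₁, D₂, ξ are orthonormal, C₃ is a unit vector with ⟨C₃, C₁⟩ = a/κ, C₃ ⊥ C₂, C₃ ⊥ ξ, C₃ ⊥ D₁, C₃ ⊥ D₂, and D₁, D₂ ⊥ C₁, C₂, ξ. Let X₁(u,v) = X(u,v) − ⟨X(u,v), ξ⟩ξ and C̃ = (1/a)C₃ − (1/κ)C₁. Then ⟨X₁(u,v) − C̃, C̃⟩ = 0 and |X₁(u,v) − C̃|² = (a² + κ² sin²θ)/(a²κ²) for all (u,v). -/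

import Mathlib

open scoped RealInnerProductSpace

set_option maxHeartbeats 1000000 in
/-- For the surface
`X(u,v) = (1/a)(C₃ + sinθ(D₁cos(au) + D₂sin(au))) + (u cosθ + b)ξ + (1/κ)(C₁(cos v - 1) + C₂ sin v)`
in `ℝ⁶ = ℝ⁵ × ℝ`, with `a = √(1+sin²θ)`, `κ = √(1+4h²+sin²θ)`, `C₁, C₂, D₁, D₂, ξ` orthonormal,
`C₃` a unit vector with `⟨C₃,C₁⟩ = a/κ` orthogonal to `C₂, ξ, D₁, D₂`,
the projection `X₁ = X - ⟨X,ξ⟩ξ` and `C̃ = (1/a)C₃ - (1/κ)C₁` satisfy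
`⟨X₁ - C̃, C̃⟩ = 0` and `|X₁ - C̃|² = (a² + κ²sin²θ)/(a²κ²)`. -/
theorem stmt_7 (θ b h : ℝ) (hθ : θ ∈ Set.Ioo 0 (Real.pi / 2)) (hh : 0 < h)
    (C₁ C₂ C₃ D₁ D₂ ξ : EuclideanSpace ℝ (Fin 6))
    (hC₁ : ‖C₁‖ = 1) (hC₂ : ‖C₂‖ = 1) (hC₃ : ‖C₃‖ = 1)
    (hD₁ : ‖D₁‖ = 1) (hD₂ : ‖D₂‖ = 1) (hξ : ‖ξ‖ = 1)
    (o1 : ⟪C₁, C₂⟫ = 0) (o2 : ⟪C₁, D₁⟫ = 0) (o3 : ⟪C₁, D₂⟫ = 0) (o4 : ⟪C₁, ξ⟫ = 0)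
    (o5 : ⟪C₂, D₁⟫ = 0) (o6 : ⟪C₂, D₂⟫ = 0) (o7 : ⟪C₂, ξ⟫ = 0)
    (o8 : ⟪D₁, D₂⟫ = 0) (o9 : ⟪D₁, ξ⟫ = 0) (o10 : ⟪D₂, ξ⟫ = 0)
    (a κ : ℝ) (ha : a = Real.sqrt (1 + Real.sin θ ^ 2))
    (hκ : κ = Real.sqrt (1 + 4 * h ^ 2 + Real.sin θ ^ 2))
    (p1 : ⟪C₃, C₁⟫ = a / κ) (p2 : ⟪C₃, C₂⟫ = 0) (p3 : ⟪C₃, ξ⟫ = 0)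
    (p4 : ⟪C₃, D₁⟫ = 0) (p5 : ⟪C₃, D₂⟫ = 0)
    (X : ℝ → ℝ → EuclideanSpace ℝ (Fin 6))
    (hX : X = fun u v =>
      a⁻¹ • (C₃ + Real.sin θ • (Real.cos (a * u) • D₁ + Real.sin (a * u) • D₂))
      + (u * Real.cos θ + b) • ξ
      + κ⁻¹ • ((Real.cos v - 1) • C₁ + Real.sin v • C₂))
    (X₁ : ℝ → ℝ → EuclideanSpace ℝ (Fin 6))
    (hX₁ : X₁ = fun u v => X u v - ⟪X u v, ξ⟫ • ξ)
    (Ctilde : EuclideanSpace ℝ (Fin 6))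
    (hCt : Ctilde = a⁻¹ • C₃ - κ⁻¹ • C₁) :
    ∀ u v : ℝ, ⟪X₁ u v - Ctilde, Ctilde⟫ = 0
      ∧ ‖X₁ u v - Ctilde‖ ^ 2
          = (a ^ 2 + κ ^ 2 * Real.sin θ ^ 2) / (a ^ 2 * κ ^ 2) := by

  have ha0 : a ≠ 0 := by rw [ha]; positivity
  have hκ0 : κ ≠ 0 := by rw [hκ]; positivity
  have s1 : ⟪C₁, C₁⟫ = 1 := by rw [real_inner_self_eq_norm_sq, hC₁]; norm_num
  have s2 : ⟪C₂, C₂⟫ = 1 := by rw [real_inner_self_eq_norm_sq, hC₂]; norm_num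
  have s4 : ⟪D₁, D₁⟫ = 1 := by rw [real_inner_self_eq_norm_sq, hD₁]; norm_num
  have s5 : ⟪D₂, D₂⟫ = 1 := by rw [real_inner_self_eq_norm_sq, hD₂]; norm_num
  have s6 : ⟪ξ, ξ⟫ = 1 := by rw [real_inner_self_eq_norm_sq, hξ]; norm_num
  have r1 : ⟪C₂, C₁⟫ = 0 := by rw [real_inner_comm]; exact o1
  have r2 : ⟪D₁, C₁⟫ = 0 := by rw [real_inner_comm]; exact o2
  have r3 : ⟪D₂, C₁⟫ = 0 := by rw [real_inner_comm]; exact o3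
  have r5 : ⟪D₁, C₂⟫ = 0 := by rw [real_inner_comm]; exact o5
  have r6 : ⟪D₂, C₂⟫ = 0 := by rw [real_inner_comm]; exact o6
  have r8 : ⟪D₂, D₁⟫ = 0 := by rw [real_inner_comm]; exact o8
  have q1 : ⟪C₁, C₃⟫ = a / κ := by rw [real_inner_comm]; exact p1
  have q2 : ⟪C₂, C₃⟫ = 0 := by rw [real_inner_comm]; exact p2
  have q4 : ⟪D₁, C₃⟫ = 0 := by rw [real_inner_comm]; exact p4
  have q5 : ⟪D₂, C₃⟫ = 0 := by rw [real_inner_comm]; exact p5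
  intro u v
  set W1 : EuclideanSpace ℝ (Fin 6) :=
    (Real.sin θ / a) • (Real.cos (a * u) • D₁ + Real.sin (a * u) • D₂) with hW1
  set W2 : EuclideanSpace ℝ (Fin 6) :=
    κ⁻¹ • (Real.cos v • C₁ + Real.sin v • C₂) with hW2
  have hip : ⟪X u v, ξ⟫ = u * Real.cos θ + b := by
    simp only [hX, inner_add_left, inner_smul_left, inner_sub_left, p3, o4, o7, o9, o10, s6,
      RCLike.conj_to_real]
    ring
  have hWsub : X₁ u v - Ctilde = W1 + W2 := by
    rw [hX₁]
    simp only
    rw [hip]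
    simp only [hX, hCt, hW1, hW2]
    module
  have hc1 : Real.cos (a * u) ^ 2 + Real.sin (a * u) ^ 2 = 1 := by
    rw [add_comm]; exact Real.sin_sq_add_cos_sq _
  have hc2 : Real.cos v ^ 2 + Real.sin v ^ 2 = 1 := by
    rw [add_comm]; exact Real.sin_sq_add_cos_sq _
  have h11 : ⟪W1, W1⟫ = Real.sin θ ^ 2 / a ^ 2 := by
    simp only [hW1, inner_add_left, inner_add_right, inner_smul_left, inner_smul_right,
      s4, s5, o8, r8, RCLike.conj_to_real]
    linear_combination ((Real.sin θ / a) ^ 2) * hc1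
  have h22 : ⟪W2, W2⟫ = 1 / κ ^ 2 := by
    simp only [hW2, inner_add_left, inner_add_right, inner_smul_left, inner_smul_right,
      s1, s2, o1, r1, RCLike.conj_to_real]
    linear_combination (κ⁻¹ ^ 2) * hc2
  have h12 : ⟪W1, W2⟫ = 0 := by
    simp only [hW1, hW2, inner_add_left, inner_add_right, inner_smul_left, inner_smul_right,
      r2, r3, r5, r6, RCLike.conj_to_real]
    ring
  constructor
  · rw [hWsub, hCt]
    simp only [inner_add_left, inner_sub_right, hW1, hW2, inner_smul_left, inner_smul_right,
      s1, q1, q2, q4, q5, r1, r2, r3, r5, r6, RCLike.conj_to_real]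
    field_simp
    ring
  · rw [← real_inner_self_eq_norm_sq, hWsub, real_inner_add_add_self, h11, h22, h12]
    field_simp
    ring
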